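/- Every graph G with feedback vertex number at most 1 and girth at least 5 admits a 2-colouring in which every monochromatic component has at most 2 vertices. -/

import Mathlib

open SimpleGraph Set

/-- The monochromatic subgraph of `G` under colouring `C`. -/
def monoSubgraph {V α : Type*} (G : SimpleGraph V) (C : V → α) : SimpleGraph V where
  Adj a b := G.Adj a b ∧ C a = C b
  symm := ⟨fun _ _ h => ⟨h.1.symm, h.2.symm⟩⟩
  loopless := ⟨fun a h => G.irrefl h.1⟩

/-- The colouring `C` of `G` has defect at most `d`: every monochromatic component has
maximum degree at most `d` (equivalently, every vertex has at most `d` neighbours of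
its own colour). -/
def HasDefect {V α : Type*} (G : SimpleGraph V) (C : V → α) (d : ℕ) : Prop :=
  ∀ v, {w | G.Adj v w ∧ C w = C v}.ncard ≤ d

/-- The colouring `C` of `G` has clustering at most `c`: every monochromatic component
has at most `c` vertices. -/
def HasClustering {V α : Type*} (G : SimpleGraph V) (C : V → α) (c : ℕ) : Prop :=
  ∀ v, {w | (monoSubgraph G C).Reachable v w}.ncard ≤ c

/-- Feedback vertex number at most `k`. -/
def FvnLE {V : Type*} (G : SimpleGraph V) (k : ℕ) : Prop :=
  ∃ A : Set V, A.Finite ∧ A.ncard ≤ k ∧ (G.induce Aᶜ).IsAcyclic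

/-- `H` is a minor of `G`, via branch sets. -/
def IsMinorOf {W V : Type*} (H : SimpleGraph W) (G : SimpleGraph V) : Prop :=
  ∃ B : W → Set V,
    (∀ w, (B w).Nonempty) ∧
    (Pairwise fun w w' => Disjoint (B w) (B w')) ∧
    (∀ w, (G.induce (B w)).Connected) ∧
    (∀ w w', H.Adj w w' → ∃ a ∈ B w, ∃ b ∈ B w', G.Adj a b)

/-- Treedepth at most `k`: there is a forest (ancestor) partial order `r` of height
at most `k` such that the endpoints of every edge are comparable. -/
def TreedepthLE {V : Type*} (G : SimpleGraph V) (k : ℕ) : Prop :=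
  ∃ r : V → V → Prop,
    (∀ v, r v v) ∧
    (∀ a b c, r a b → r b c → r a c) ∧
    (∀ a b, r a b → r b a → a = b) ∧
    (∀ v a b, r a v → r b v → r a b ∨ r b a) ∧
    (∀ v, {u | r u v}.Finite ∧ {u | r u v}.ncard ≤ k) ∧
    (∀ a b, G.Adj a b → r a b ∨ r b a)

/-- Pathwidth at most `k`, via path decompositions. -/
def PathwidthLE {V : Type*} (G : SimpleGraph V) (k : ℕ) : Prop :=
  ∃ (n : ℕ) (B : Fin n → Set V),
    (∀ v, ∃ i, v ∈ B i) ∧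
    (∀ a b, G.Adj a b → ∃ i, a ∈ B i ∧ b ∈ B i) ∧
    (∀ i j l : Fin n, i ≤ j → j ≤ l → ∀ v, v ∈ B i → v ∈ B l → v ∈ B j) ∧
    (∀ i, (B i).ncard ≤ k + 1)

/-- `w` is 2-reachable from `v` with respect to the order `r`. -/
def TwoReach {V : Type*} (G : SimpleGraph V) (r : V → V → Prop) (v w : V) : Prop :=
  w = v ∨ (r w v ∧ (G.Adj v w ∨ ∃ u, r v u ∧ u ≠ v ∧ G.Adj v u ∧ G.Adj u w))

/-- The 2-strong colouring number `col₂(G)`. -/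
noncomputable def col2 {V : Type*} (G : SimpleGraph V) : ℕ :=
  sInf {m | ∃ r : V → V → Prop, IsLinearOrder V r ∧ ∀ v, {w | TwoReach G r v w}.ncard ≤ m}

/-- `G` contains a complete bipartite subgraph `K_{s,t}`. -/
def HasKstSubgraph {V : Type*} (G : SimpleGraph V) (s t : ℕ) : Prop :=
  ∃ (A B : Finset V), Disjoint A B ∧ A.card = s ∧ B.card = t ∧
    ∀ a ∈ A, ∀ b ∈ B, G.Adj a b

/-- `x` is a prefix of `y`, as nodes of the complete `d`-ary tree of height `n`. -/
def SeqPrefix {n d : ℕ} (x y : Σ i : Fin n, Fin (i : ℕ) → Fin d) : Prop :=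
  ∃ h : (x.1 : ℕ) ≤ (y.1 : ℕ), ∀ a : Fin (x.1 : ℕ), y.2 (Fin.castLE h a) = x.2 a

/-- The graph `H^(d)`, on the nodes of the complete `d`-ary tree of height `n`:
on each root–leaf path `(x_1, …, x_n)`, `x_i x_j` is an edge iff `v_i v_j ∈ E(H)`. -/
def HdGraph (n d : ℕ) (H : SimpleGraph (Fin n)) :
    SimpleGraph (Σ i : Fin n, Fin (i : ℕ) → Fin d) where
  Adj x y := H.Adj x.1 y.1 ∧ (SeqPrefix x y ∨ SeqPrefix y x)
  symm := ⟨fun _ _ h => ⟨h.1.symm, h.2.symm⟩⟩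
  loopless := ⟨fun x h => H.irrefl h.1⟩

/-- Planarity, via Wagner's characterisation: no `K₅` minor and no `K_{3,3}` minor. -/
def IsPlanarWagner {V : Type*} (G : SimpleGraph V) : Prop :=
  ¬ IsMinorOf (⊤ : SimpleGraph (Fin 5)) G ∧
  ¬ IsMinorOf (completeBipartiteGraph (Fin 3) (Fin 3)) G

/-- The independence number. -/
noncomputable def indepNum {V : Type*} (H : SimpleGraph V) : ℕ :=
  sSup {m | ∃ s : Finset V, s.card = m ∧ ∀ a ∈ s, ∀ b ∈ s, a ≠ b → ¬ H.Adj a b}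

private lemma isAcyclic_induce_subset {V : Type*} {G : SimpleGraph V} {s s' : Set V}
    (hsub : s ⊆ s') (h : (G.induce s').IsAcyclic) : (G.induce s).IsAcyclic := by
  intro v w hw
  exact h _ (hw.map (f := (SimpleGraph.induceHomOfLE G hsub).toHom)
    (SimpleGraph.induceHomOfLE G hsub).injective)

private lemma no_triangle {V : Type*} {G : SimpleGraph V} (h2 : (5 : ℕ∞) ≤ G.egirth)
    {a b c : V} (hab : G.Adj a b) (hbc : G.Adj b c) (hca : G.Adj c a) : False := by
  have hcyc : (Walk.cons hab (Walk.cons hbc (Walk.cons hca Walk.nil))).IsCycle := by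
    rw [Walk.cons_isCycle_iff]
    constructor
    · simp [Walk.isPath_def, hbc.ne, hca.ne, hab.ne']
    · simp only [Walk.edges_cons, Walk.edges_nil, List.mem_cons, List.not_mem_nil, or_false]
      push_neg
      constructor
      · simp [Sym2.eq_iff, hab.ne, hca.ne']
      · simp [Sym2.eq_iff, hca.ne', hbc.ne]
  have := SimpleGraph.le_egirth.mp h2 a _ hcyc
  simp only [Walk.length_cons, Walk.length_nil] at this
  norm_num at this

private lemma no_c4 {V : Type*} {G : SimpleGraph V} (h2 : (5 : ℕ∞) ≤ G.egirth)
    {a b c d : V} (hab : G.Adj a b) (hbc : G.Adj b c) (hcd : G.Adj c d) (hda : G.Adj d a)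
    (hac : a ≠ c) (hbd : b ≠ d) : False := by
  have hcyc : (Walk.cons hab (Walk.cons hbc (Walk.cons hcd (Walk.cons hda Walk.nil)))).IsCycle := by
    rw [Walk.cons_isCycle_iff]
    constructor
    · simp [Walk.isPath_def, hbc.ne, hcd.ne, hda.ne, hbd, hac.symm, hab.ne', List.nodup_cons]
    · simp only [Walk.edges_cons, Walk.edges_nil, List.mem_cons, List.not_mem_nil, or_false]
      push_neg
      refine ⟨?_, ?_, ?_⟩
      · simp [Sym2.eq_iff, hab.ne, hac]
      · simp [Sym2.eq_iff, hac, hbd, hda.ne', hab.ne]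
      · simp [Sym2.eq_iff, hda.ne', hbd]
  have := SimpleGraph.le_egirth.mp h2 a _ hcyc
  simp only [Walk.length_cons, Walk.length_nil] at this
  norm_num at this

private lemma clustering_of_degree_le_one {V : Type*} [Finite V] (H : SimpleGraph V)
    (h : ∀ v, {w | H.Adj v w}.ncard ≤ 1) :
    ∀ v, {w | H.Reachable v w}.ncard ≤ 2 := by
  have key : ∀ (x y : V), H.Reachable x y → x = y ∨ H.Adj x y := by
    intro x y hr
    obtain ⟨p⟩ := hr
    induction p with
    | nil => exact Or.inl rfl
    | @cons u v w h' p ih =>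
      rcases ih with rfl | hadj
      · exact Or.inr h'
      · have : u = w := by
          have h1 : u ∈ {t | H.Adj v t} := h'.symm
          have h2 : w ∈ {t | H.Adj v t} := hadj
          exact (Set.ncard_le_one_iff).mp (h v) h1 h2
        exact Or.inl this
  intro v
  have hsub : {w | H.Reachable v w} ⊆ insert v {w | H.Adj v w} := by
    intro w hw
    rcases key v w hw with rfl | hadj
    · exact Set.mem_insert _ _
    · exact Set.mem_insert_of_mem _ hadj
  calc {w | H.Reachable v w}.ncard ≤ (insert v {w | H.Adj v w}).ncard :=
        Set.ncard_le_ncard hsub (Set.toFinite _)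
    _ ≤ {w | H.Adj v w}.ncard + 1 := Set.ncard_insert_le _ _
    _ ≤ 2 := by have := h v; omega

private lemma exists_leaf {V : Type*} [Fintype V] {F : SimpleGraph V} (hF : F.IsAcyclic)
    {t : Finset V} (ht : t.Nonempty) :
    ∃ v ∈ t, ∀ a ∈ t, ∀ b ∈ t, F.Adj v a → F.Adj v b → a = b := by
  classical
  obtain ⟨v0, hv0⟩ := ht
  set L : Set ℕ := {n | ∃ (v u : V) (p : F.Walk v u), p.IsPath ∧ (∀ x ∈ p.support, x ∈ t)
      ∧ p.length = n} with hL
  have hne : L.Nonempty := ⟨0, v0, v0, Walk.nil, by simp, by simp [hv0], rfl⟩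
  have hbdd : BddAbove L := by
    refine ⟨Fintype.card V, fun n hn => ?_⟩
    obtain ⟨v, u, p, hp, _, hlen⟩ := hn
    exact hlen ▸ le_of_lt hp.length_lt
  have hmem := Nat.sSup_mem hne hbdd
  obtain ⟨v, u, p, hp, hsupp, hlen⟩ := hmem
  refine ⟨v, hsupp v p.start_mem_support, ?_⟩
  have hstep : ∀ w ∈ t, F.Adj v w → w ∈ p.support := by
    intro w hw hadj
    by_contra hws
    have hq : (Walk.cons hadj.symm p).IsPath := (Walk.cons_isPath_iff _ _).mpr ⟨hp, hws⟩
    have hmem2 : (p.length + 1) ∈ L := by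
      refine ⟨w, u, Walk.cons hadj.symm p, hq, ?_, by simp⟩
      intro x hx
      rw [Walk.support_cons, List.mem_cons] at hx
      rcases hx with rfl | hx
      · exact hw
      · exact hsupp x hx
    have := le_csSup hbdd hmem2
    omega
  cases p with
  | nil =>
    intro a ha b hb hva hvb
    have := hstep a ha hva
    simp only [Walk.support_nil, List.mem_cons, List.not_mem_nil, or_false] at this
    exact absurd this.symm hva.ne
  | @cons _ x _ h' q =>
    have hkey : ∀ w ∈ t, F.Adj v w → w = x := by
      intro w hw hadj
      by_contra hwx
      have hws : w ∈ (Walk.cons h' q).support := hstep w hw hadj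
      set tu := (Walk.cons h' q).takeUntil w hws with htu
      have htupath : tu.IsPath := hp.takeUntil hws
      have hnoedge : s(w, v) ∉ tu.edges := by
        intro he
        have he2 : s(w, v) ∈ (Walk.cons h' q).edges := Walk.edges_takeUntil_subset _ hws he
        rw [Walk.edges_cons, List.mem_cons] at he2
        rcases he2 with he2 | he2
        · rw [Sym2.eq_iff] at he2
          rcases he2 with ⟨rfl, _⟩ | ⟨h1, _⟩
          · exact hadj.ne rfl
          · exact hwx h1
        · have : v ∈ q.support := by
            rw [Sym2.eq_swap] at he2
            exact q.fst_mem_support_of_mem_edges he2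
          exact ((Walk.cons_isPath_iff _ _).mp hp).2 this
      have hcyc : (Walk.cons hadj.symm tu).IsCycle :=
        (Walk.cons_isCycle_iff _ _).mpr ⟨htupath, hnoedge⟩
      exact hF _ hcyc
    intro a ha b hb hva hvb
    rw [hkey a ha hva, hkey b hb hvb]

private lemma forest_coloring {W : Type*} [Fintype W] {F : SimpleGraph W} (hF : F.IsAcyclic)
    (S : Set W)
    (hS1 : ∀ s ∈ S, ∀ u ∈ S, s ≠ u → ¬ F.Adj s u) :
    ∃ c : W → Fin 2,
      (∀ s ∈ S, c s = 1) ∧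
      (∀ u v, F.Adj u v → c u = c v → (u ∈ S ∧ v ∉ S) ∨ (v ∈ S ∧ u ∉ S)) ∧
      (∀ s ∈ S, ∀ a b, F.Adj s a → c a = 1 → F.Adj s b → c b = 1 → a = b) := by
  classical
  suffices h : ∀ (t : Finset W), ∃ c : W → Fin 2,
      (∀ s ∈ S, s ∈ t → c s = 1) ∧
      (∀ u v, u ∈ t → v ∈ t → F.Adj u v → c u = c v → (u ∈ S ∧ v ∉ S) ∨ (v ∈ S ∧ u ∉ S)) ∧
      (∀ s ∈ S, s ∈ t → ∀ a b, a ∈ t → b ∈ t →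
        F.Adj s a → c a = 1 → F.Adj s b → c b = 1 → a = b) by
    obtain ⟨c, h1, h2, h3⟩ := h Finset.univ
    exact ⟨c, fun s hs => h1 s hs (Finset.mem_univ s),
      fun u v ha hc => h2 u v (Finset.mem_univ u) (Finset.mem_univ v) ha hc,
      fun s hs a b => h3 s hs (Finset.mem_univ s) a b (Finset.mem_univ a) (Finset.mem_univ b)⟩
  intro t
  induction t using Finset.strongInduction with
  | _ t ih =>
    rcases Finset.eq_empty_or_nonempty t with rfl | htne
    · exact ⟨fun _ => 0, by simp, by simp, by simp⟩
    obtain ⟨v, hvt, hleaf⟩ := exists_leaf hF htne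
    obtain ⟨c', h1, h2, h3⟩ := ih (t.erase v) (Finset.erase_ssubset hvt)
    set b : Fin 2 := if v ∈ S then 1 else
      (if ∃ u ∈ t.erase v, F.Adj v u ∧ c' u = 0 then 1 else 0) with hb
    set c : W → Fin 2 := Function.update c' v b with hc
    have hcv : c v = b := Function.update_self v b c'
    have hcne : ∀ w, w ≠ v → c w = c' w := fun w hw => Function.update_of_ne hw b c'
    have hmem : ∀ w, w ∈ t → w ≠ v → w ∈ t.erase v := fun w hw hne =>
      Finset.mem_erase.mpr ⟨hne, hw⟩
    refine ⟨c, ?_, ?_, ?_⟩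
    · intro s hs hst
      by_cases hsv : s = v
      · subst hsv; rw [hcv, hb]; simp [hs]
      · rw [hcne s hsv]; exact h1 s hs (hmem s hst hsv)
    · -- property (ii)
      have claim : ∀ w, w ∈ t.erase v → F.Adj v w → c v = c w →
          (v ∈ S ∧ w ∉ S) ∨ (w ∈ S ∧ v ∉ S) := by
        intro w hw hadj heq
        have hwv : w ≠ v := (Finset.mem_erase.mp hw).1
        by_cases hvS : v ∈ S
        · left
          refine ⟨hvS, fun hwS => ?_⟩
          exact hS1 v hvS w hwS hadj.ne hadj
        · exfalso
          rw [hcv, hcne w hwv] at heq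
          by_cases hex : ∃ u ∈ t.erase v, F.Adj v u ∧ c' u = 0
          · obtain ⟨u0, hu0, hadj0, hcu0⟩ := hex
            have : u0 = w := hleaf u0 (Finset.mem_of_mem_erase hu0) w
              (Finset.mem_of_mem_erase hw) hadj0 hadj
            rw [this] at hcu0
            have : b = 1 := by rw [hb]; simp only [hvS, if_false]; rw [if_pos ⟨w, hw, hadj, hcu0⟩]
            rw [this] at heq
            rw [← heq] at hcu0
            exact absurd hcu0 (by decide)
          · have hb0 : b = 0 := by rw [hb]; simp only [hvS, if_false]; rw [if_neg hex]
            rw [hb0] at heq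
            exact hex ⟨w, hw, hadj, heq.symm⟩
      intro x y hx hy hadj heq
      by_cases hxv : x = v
      · subst hxv
        exact claim y (hmem y hy (fun h => hadj.ne h.symm)) hadj heq
      · by_cases hyv : y = v
        · subst hyv
          rcases claim x (hmem x hx hxv) hadj.symm heq.symm with h | h
          · exact Or.inr h
          · exact Or.inl h
        · rw [hcne x hxv, hcne y hyv] at heq
          exact h2 x y (hmem x hx hxv) (hmem y hy hyv) hadj heq
    · -- property (iii)
      intro s hs hst a bb ha hbb hsa hca hsb hcb
      by_cases hsv : s = v
      · subst hsv
        exact hleaf a ha bb hbb hsa hsb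
      · have hstv : s ∈ t.erase v := hmem s hst hsv
        have hnv : ∀ w, w ∈ t → F.Adj s w → c w = 1 → w ≠ v := by
          intro w hw hadj hcw hwv
          rw [hwv] at hcw hadj
          rw [hcv] at hcw
          by_cases hvS : v ∈ S
          · exact hS1 s hs v hvS hsv hadj
          · have hex : ∃ u ∈ t.erase v, F.Adj v u ∧ c' u = 0 := by
              by_contra hex
              rw [hb] at hcw
              simp only [hvS, if_false] at hcw
              rw [if_neg hex] at hcw
              exact absurd hcw (by decide)
            obtain ⟨u0, hu0, hadj0, hcu0⟩ := hex
            have : u0 = s := hleaf u0 (Finset.mem_of_mem_erase hu0) s hst hadj0 hadj.symm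
            rw [this] at hcu0
            rw [h1 s hs hstv] at hcu0
            exact absurd hcu0 (by decide)
        have hav : a ≠ v := hnv a ha hsa hca
        have hbv : bb ≠ v := hnv bb hbb hsb hcb
        rw [hcne a hav] at hca
        rw [hcne bb hbv] at hcb
        exact h3 s hs hstv a bb (hmem a ha hav) (hmem bb hbb hbv) hsa hca hsb hcb

/-- every graph with feedback vertex number at most 1 and girth at least 5
is 2-colourable with clustering 2. -/
theorem stmt4 {V : Type*} [Fintype V] (G : SimpleGraph V)
    (h1 : FvnLE G 1) (h2 : (5 : ℕ∞) ≤ G.egirth) :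
    ∃ C : V → Fin 2, HasClustering G C 2 := by
  classical
  obtain ⟨A, hAfin, hAcard, hAcyc⟩ := h1
  cases isEmpty_or_nonempty V with
  | inl hE => exact ⟨fun _ => 0, fun v => (hE.false v).elim⟩
  | inr hNE =>
    obtain ⟨a, hsub⟩ : ∃ a : V, ({a}ᶜ : Set V) ⊆ Aᶜ := by
      rcases (Set.ncard_le_one_iff_eq hAfin).mp hAcard with rfl | ⟨a, rfl⟩
      · exact ⟨Classical.arbitrary V, by simp⟩
      · exact ⟨a, subset_rfl⟩
    have hFac : (G.induce ({a}ᶜ : Set V)).IsAcyclic := isAcyclic_induce_subset hsub hAcyc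
    haveI : Fintype ↥({a}ᶜ : Set V) := Fintype.ofFinite _
    set F := G.induce ({a}ᶜ : Set V) with hF
    set S : Set ↥({a}ᶜ : Set V) := {s | G.Adj a ↑s} with hS
    have hS1 : ∀ s ∈ S, ∀ u ∈ S, s ≠ u → ¬ F.Adj s u := by
      intro s hs u hu _ hadj
      exact no_triangle h2 hs (hadj : G.Adj ↑s ↑u) (Adj.symm hu)
    obtain ⟨c, hc1, hc2, hc3⟩ := forest_coloring hFac S hS1
    set C : V → Fin 2 := fun v =>
      if h : v = a then 0 else c ⟨v, Set.mem_compl_singleton_iff.mpr h⟩ with hC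
    have hCa : C a = 0 := by simp [hC]
    have hCne : ∀ (v : V) (h : v ≠ a), C v = c ⟨v, Set.mem_compl_singleton_iff.mpr h⟩ := by
      intro v h; simp [hC, h]
    have hdeg : ∀ x, {w | (monoSubgraph G C).Adj x w}.ncard ≤ 1 := by
      intro x
      rw [Set.ncard_le_one_iff]
      intro w1 w2 hw1 hw2
      obtain ⟨hadj1, heq1⟩ := hw1
      obtain ⟨hadj2, heq2⟩ := hw2
      by_cases hxa : x = a
      · exfalso
        rw [hxa] at hadj1 heq1
        have hwa : w1 ≠ a := hadj1.ne'
        have hmemS : (⟨w1, Set.mem_compl_singleton_iff.mpr hwa⟩ : ↥({a}ᶜ : Set V)) ∈ S := hadj1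
        have h1' := hc1 _ hmemS
        rw [hCa, hCne w1 hwa, h1'] at heq1
        exact absurd heq1 (by decide)
      · have hwna : ∀ w, G.Adj x w → C x = C w → w ≠ a := by
          intro w hadj heq hwa
          rw [hwa] at hadj heq
          have hmemS : (⟨x, Set.mem_compl_singleton_iff.mpr hxa⟩ : ↥({a}ᶜ : Set V)) ∈ S :=
            hadj.symm
          have h1' := hc1 _ hmemS
          rw [hCa, hCne x hxa, h1'] at heq
          exact absurd heq (by decide)
        have hw1a : w1 ≠ a := hwna w1 hadj1 heq1
        have hw2a : w2 ≠ a := hwna w2 hadj2 heq2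
        set xh : ↥({a}ᶜ : Set V) := ⟨x, Set.mem_compl_singleton_iff.mpr hxa⟩ with hxh
        set w1h : ↥({a}ᶜ : Set V) := ⟨w1, Set.mem_compl_singleton_iff.mpr hw1a⟩ with hw1h
        set w2h : ↥({a}ᶜ : Set V) := ⟨w2, Set.mem_compl_singleton_iff.mpr hw2a⟩ with hw2h
        have hFadj1 : F.Adj xh w1h := hadj1
        have hFadj2 : F.Adj xh w2h := hadj2
        have hceq1 : c w1h = c xh := by
          rw [← hCne w1 hw1a, ← hCne x hxa]; exact heq1.symm
        have hceq2 : c w2h = c xh := by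
          rw [← hCne w2 hw2a, ← hCne x hxa]; exact heq2.symm
        by_cases hxS : xh ∈ S
        · have hx1 : c xh = 1 := hc1 _ hxS
          have : w1h = w2h := hc3 xh hxS w1h w2h hFadj1 (by rw [hceq1, hx1])
            hFadj2 (by rw [hceq2, hx1])
          exact congrArg Subtype.val this
        · have hw1S : w1h ∈ S := by
            rcases hc2 xh w1h hFadj1 hceq1.symm with h | h
            · exact absurd h.1 hxS
            · exact h.1
          have hw2S : w2h ∈ S := by
            rcases hc2 xh w2h hFadj2 hceq2.symm with h | h
            · exact absurd h.1 hxS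
            · exact h.1
          by_contra hne
          exact no_c4 h2 (hw1S : G.Adj a w1) hadj1.symm hadj2 (Adj.symm hw2S)
            (Ne.symm hxa) hne
    exact ⟨C, fun v => clustering_of_degree_le_one (monoSubgraph G C) hdeg v⟩
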